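/- Define φ_n^{(α,β)}(μ) := Σ_{k=0}^{[n/2]} [(d/dx)^{2k} P_n^{(α,β)}(x)]|_{x=1} · μ^k. Then (n+α+β)·φ_n^{(α,β)}(μ) = (n+β)·φ_n^{(α,β−1)}(μ) + (n+α)·φ_n^{(α−1,β)}(μ), and φ_{n−1}^{(α,β)}(μ) = φ_n^{(α,β−1)}(μ) − φ_n^{(α−1,β)}(μ). -/

import Mathlib

open Polynomial

/-- The Jacobi polynomial `P_n^{(α,β)}` as a real polynomial in `x`. -/
noncomputable def jacobiP (α β : ℝ) (n : ℕ) : Polynomial ℝ :=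
  C ((ascPochhammer ℝ n).eval (α + 1) / (n.factorial : ℝ)) *
    ∑ k ∈ Finset.range (n + 1),
      C ((ascPochhammer ℝ k).eval (-(n : ℝ)) * (ascPochhammer ℝ k).eval ((n : ℝ) + α + β + 1) /
          ((k.factorial : ℝ) * (ascPochhammer ℝ k).eval (α + 1))) *
        (C (1 / 2 : ℝ) * (1 - X)) ^ k

/-- `φ_n^{(α,β)}(μ) = Σ_{k=0}^{[n/2]} (d/dx)^{2k} P_n^{(α,β)}(x)|_{x=1} · μ^k`. -/
noncomputable def phi (α β : ℝ) (n : ℕ) : Polynomial ℝ :=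
  ∑ k ∈ Finset.range (n / 2 + 1),
    C ((Polynomial.derivative^[2 * k] (jacobiP α β n)).eval 1) * X ^ k

/-- All complex zeros of `p` are real (i.e. `p` splits over `ℝ`). -/
def RealRooted (p : Polynomial ℝ) : Prop := (p.roots.card : ℕ) = p.natDegree

/-- All zeros of `p` are real and simple. -/
def AllRealSimple (p : Polynomial ℝ) : Prop := RealRooted p ∧ p.roots.Nodup

/-- Zeros of `g` and `h` interlace strictly. -/
def StrictlyInterlacing (g h : Polynomial ℝ) : Prop :=
  AllRealSimple g ∧ AllRealSimple h ∧
  (∀ x : ℝ, ¬(g.IsRoot x ∧ h.IsRoot x)) ∧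
  (∀ x y : ℝ, g.IsRoot x → g.IsRoot y → x < y →
      (∀ t : ℝ, g.IsRoot t → ¬(x < t ∧ t < y)) →
      ∃! z : ℝ, h.IsRoot z ∧ x < z ∧ z < y) ∧
  (∀ x y : ℝ, h.IsRoot x → h.IsRoot y → x < y →
      (∀ t : ℝ, h.IsRoot t → ¬(x < t ∧ t < y)) →
      ∃! z : ℝ, g.IsRoot z ∧ x < z ∧ z < y)

/-- `(g,h)` is a real pair: every real combination has only real zeros.
This is equivalent to non-strict interlacing of the zeros. -/
def RealPair (g h : Polynomial ℝ) : Prop :=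
  ∀ a b : ℝ, RealRooted (C a * g + C b * h)

/-- The zero of `p` closest to the origin, when all zeros of `p` are negative. -/
noncomputable def maxRoot (p : Polynomial ℝ) : ℝ := sSup {x : ℝ | p.IsRoot x}

/-- `f` is Hurwitz stable: all complex zeros lie in the open left half-plane. -/
def HurwitzStable (f : Polynomial ℝ) : Prop :=
  ∀ z : ℂ, Polynomial.aeval z f = 0 → z.re < 0

lemma P_succ_eval (j : ℕ) (x : ℝ) :
    (ascPochhammer ℝ (j+1)).eval x = x * (ascPochhammer ℝ j).eval (x+1) := by
  rw [ascPochhammer_succ_left]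
  simp [eval_comp]

lemma P_split (m j : ℕ) (x : ℝ) :
    (ascPochhammer ℝ (m+j)).eval x =
      (ascPochhammer ℝ m).eval x * (ascPochhammer ℝ j).eval (x + m) := by
  rw [← ascPochhammer_mul]
  simp [eval_comp]

lemma hq_lemma (x : ℝ) (m : ℕ) :
    x * (ascPochhammer ℝ m).eval (x+1) = (ascPochhammer ℝ m).eval x * (x + m) := by
  rw [← P_succ_eval, ascPochhammer_succ_eval]

lemma hcore_lemma (x : ℝ) (j : ℕ) (y : ℝ) (hy : y = x + j) :
    x * (ascPochhammer ℝ j).eval (x+1) = y * (ascPochhammer ℝ j).eval x := by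
  subst hy
  cases j with
  | zero => simp
  | succ t =>
    rw [ascPochhammer_succ_eval, P_succ_eval]
    push_cast
    ring

lemma hdiff_lemma (x : ℝ) (j : ℕ) :
    (ascPochhammer ℝ j).eval (x+1) - (ascPochhammer ℝ j).eval x =
      j * (ascPochhammer ℝ (j-1)).eval (x+1) := by
  cases j with
  | zero => simp
  | succ t =>
    rw [ascPochhammer_succ_eval, P_succ_eval]
    push_cast
    ring

noncomputable def Ffun (a b : ℝ) (N m : ℕ) : ℝ :=
  (ascPochhammer ℝ N).eval (a+1) / N.factorial *
    ((ascPochhammer ℝ m).eval (-(N:ℝ)) * (ascPochhammer ℝ m).eval ((N:ℝ)+a+b+1) /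
      (ascPochhammer ℝ m).eval (a+1)) * (-1/2)^m

lemma cancel (c f u x y : ℝ) (hc : c ≠ 0) :
    (c*x)/f * (y/c) * u = x*y/f*u := by
  have h : (c*x) * (y/c) = x*y := by
    field_simp
  calc (c*x)/f * (y/c) * u = ((c*x) * (y/c))/f*u := by ring
    _ = x*y/f*u := by rw [h]

lemma key1 (α β : ℝ) (n m : ℕ) (hm : m ≤ n)
    (hd1 : (ascPochhammer ℝ m).eval (α+1) ≠ 0)
    (hd2 : (ascPochhammer ℝ m).eval α ≠ 0) :
    ((n:ℝ)+α+β) * Ffun α β n m =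
      ((n:ℝ)+β) * Ffun α (β-1) n m + ((n:ℝ)+α) * Ffun (α-1) β n m := by
  obtain ⟨j, rfl⟩ := Nat.exists_eq_add_of_le hm
  have hf : ((m+j).factorial : ℝ) ≠ 0 := Nat.cast_ne_zero.mpr (Nat.factorial_ne_zero _)
  simp only [Ffun]
  rw [show ((m+j:ℕ):ℝ)+α+(β-1)+1 = ((m+j:ℕ):ℝ)+α+β by ring]
  rw [show α-1+1 = α by ring]
  rw [show ((m+j:ℕ):ℝ)+(α-1)+β+1 = ((m+j:ℕ):ℝ)+α+β by ring]
  rw [P_split m j (α+1), P_split m j α]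
  rw [cancel _ _ _ _ _ hd1, cancel _ _ _ _ _ hd1, cancel _ _ _ _ _ hd2]
  have hq' := hq_lemma (((m+j:ℕ):ℝ)+α+β) m
  have hcore' := hcore_lemma (α+(m:ℝ)) j (α+((m+j:ℕ):ℝ)) (by push_cast; ring)
  rw [show α+(m:ℝ)+1 = α+1+(m:ℝ) by ring] at hcore'
  linear_combination
    ((ascPochhammer ℝ j).eval (α+1+(m:ℝ)) * (ascPochhammer ℝ m).eval (-((m+j:ℕ):ℝ)) *
      (-1/2)^m / ((m+j).factorial : ℝ)) * hq' +
    ((ascPochhammer ℝ m).eval (-((m+j:ℕ):ℝ)) * (ascPochhammer ℝ m).eval (((m+j:ℕ):ℝ)+α+β) *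
      (-1/2)^m / ((m+j).factorial : ℝ)) * hcore'

lemma key2 (α β : ℝ) (m j : ℕ) (hn : 1 ≤ m + j)
    (hd1 : (ascPochhammer ℝ m).eval (α+1) ≠ 0)
    (hd2 : (ascPochhammer ℝ m).eval α ≠ 0) :
    (if m ≤ m + j - 1 then Ffun α β (m+j-1) m else 0) =
      Ffun α (β-1) (m+j) m - Ffun (α-1) β (m+j) m := by
  have hf : ((m+j).factorial : ℝ) ≠ 0 := Nat.cast_ne_zero.mpr (Nat.factorial_ne_zero _)
  simp only [Ffun]
  rw [show ((m+j:ℕ):ℝ)+α+(β-1)+1 = ((m+j:ℕ):ℝ)+α+β by ring]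
  rw [show α-1+1 = α by ring]
  rw [show ((m+j:ℕ):ℝ)+(α-1)+β+1 = ((m+j:ℕ):ℝ)+α+β by ring]
  rw [P_split m j (α+1), P_split m j α]
  rw [cancel _ _ _ _ _ hd1, cancel _ _ _ _ _ hd2]
  cases j with
  | zero =>
    rw [if_neg (by omega)]
    simp only [ascPochhammer_zero, eval_one]
    ring
  | succ t =>
    rw [if_pos (by omega), show m+(t+1)-1 = m+t from by omega]
    rw [P_split m t (α+1)]
    rw [cancel _ _ _ _ _ hd1]
    have hf' : ((m+t).factorial : ℝ) ≠ 0 := Nat.cast_ne_zero.mpr (Nat.factorial_ne_zero _)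
    have hN : ((m+(t+1):ℕ) : ℝ) ≠ 0 := by positivity
    have hfac : (((m+(t+1)).factorial : ℕ) : ℝ) =
        ((m+(t+1):ℕ) : ℝ) * ((m+t).factorial : ℕ) := by
      rw [show m+(t+1) = (m+t)+1 from by omega, Nat.factorial_succ]
      push_cast
      ring
    have hq' := hq_lemma (-((m+(t+1):ℕ) : ℝ)) m
    rw [show -((m+(t+1):ℕ):ℝ)+1 = -((m+t:ℕ):ℝ) by push_cast; ring] at hq'
    have hBf : (ascPochhammer ℝ m).eval (-((m+t:ℕ):ℝ)) / ((m+t).factorial : ℝ) =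
        ((t:ℝ)+1) * (ascPochhammer ℝ m).eval (-((m+(t+1):ℕ):ℝ)) / ((m+(t+1)).factorial : ℝ) := by
      rw [hfac, div_eq_div_iff hf' (mul_ne_zero hN hf')]
      linear_combination (norm := (push_cast; ring1)) (-((m+t).factorial : ℝ)) * hq'
    have hdiff' := hdiff_lemma (α+(m:ℝ)) (t+1)
    rw [show α+(m:ℝ)+1 = α+1+(m:ℝ) by ring] at hdiff'
    rw [show t+1-1 = t from rfl] at hdiff'
    rw [show (((m+t:ℕ)):ℝ)+α+β+1 = ((m+(t+1):ℕ):ℝ)+α+β by push_cast; ring]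
    linear_combination (norm := (push_cast; ring1))
      ((ascPochhammer ℝ t).eval (α+1+(m:ℝ)) * (ascPochhammer ℝ m).eval (((m+(t+1):ℕ):ℝ)+α+β) *
        (-1/2)^m) * hBf -
      ((ascPochhammer ℝ m).eval (-((m+(t+1):ℕ):ℝ)) * (ascPochhammer ℝ m).eval (((m+(t+1):ℕ):ℝ)+α+β) *
        (-1/2)^m / ((m+(t+1)).factorial : ℝ)) * hdiff'

lemma iter_deriv_one_sub_pow (k m : ℕ) :
    derivative^[m] ((1 - X : ℝ[X])^k) =
      C ((-1)^m * (k.descFactorial m : ℝ)) * (1 - X)^(k - m) := by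
  induction m with
  | zero => simp
  | succ m ih =>
    rw [Function.iterate_succ_apply', ih, derivative_C_mul, derivative_pow]
    have : derivative (1 - X : ℝ[X]) = -1 := by simp
    rw [this]
    rcases le_or_gt k m with h | h
    · have h1 : k.descFactorial m = 0 ∨ k - m = 0 := by
        rcases lt_or_eq_of_le h with h' | h'
        · exact Or.inl (Nat.descFactorial_eq_zero_iff_lt.mpr h')
        · exact Or.inr (by omega)
      have h2 : k.descFactorial (m+1) = 0 := Nat.descFactorial_eq_zero_iff_lt.mpr (by omega)
      rcases h1 with h1 | h1 <;> simp [h1, h2]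
    · have h1 : k - m = (k - (m+1)) + 1 := by omega
      have h2 : (k.descFactorial (m+1) : ℝ) = (k - m : ℕ) * k.descFactorial m := by
        rw [Nat.descFactorial_succ]; push_cast; ring
      have h3 : k - m = 1 + (k - (1+m)) := by omega
      rw [h1, h2]
      ring_nf
      rw [h3, Nat.add_sub_cancel_left]
      simp only [← neg_mul, ← C_neg, ← C_mul, ← C_sub]
      congr 1
      ring

lemma eval_one_iter_deriv (k m : ℕ) :
    (derivative^[m] ((1 - X : ℝ[X])^k)).eval 1 =
      if m = k then (-1)^k * (k.factorial : ℝ) else 0 := by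
  rw [iter_deriv_one_sub_pow]
  simp only [eval_mul, eval_C, eval_pow, eval_sub, eval_one, eval_X, sub_self]
  rcases eq_or_ne m k with h | h
  · subst h
    simp [Nat.descFactorial_self]
  · rw [if_neg h]
    rcases lt_or_gt_of_ne h with h' | h'
    · rw [zero_pow (by omega : k - m ≠ 0), mul_zero]
    · rw [Nat.descFactorial_eq_zero_iff_lt.mpr h']
      simp


lemma jacobi_iter_deriv_eval_one (α β : ℝ) (n m : ℕ) :
    (derivative^[m] (jacobiP α β n)).eval 1 =
      if m ≤ n then Ffun α β n m else 0 := by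
  simp only [Ffun]
  rw [jacobiP, iterate_derivative_C_mul]
  have hterm : ∀ k : ℕ,
      (C ((ascPochhammer ℝ k).eval (-(n : ℝ)) * (ascPochhammer ℝ k).eval ((n : ℝ) + α + β + 1) /
          ((k.factorial : ℝ) * (ascPochhammer ℝ k).eval (α + 1))) *
        (C (1 / 2 : ℝ) * (1 - X)) ^ k) =
      C ((ascPochhammer ℝ k).eval (-(n : ℝ)) * (ascPochhammer ℝ k).eval ((n : ℝ) + α + β + 1) /
          ((k.factorial : ℝ) * (ascPochhammer ℝ k).eval (α + 1)) * (1/2)^k) * (1 - X) ^ k := by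
    intro k
    rw [mul_pow, ← C_pow, C_mul]
    ring
  simp only [hterm]
  rw [iterate_derivative_sum]
  simp only [iterate_derivative_C_mul, eval_mul, eval_C, eval_finset_sum, eval_one_iter_deriv]
  simp only [mul_ite, mul_zero]
  rw [Finset.sum_ite_eq (Finset.range (n+1)) m]
  simp only [Finset.mem_range, Nat.lt_succ_iff]
  rcases le_or_gt m n with h | h
  · rw [if_pos h, if_pos h]
    have hm : (m.factorial : ℝ) ≠ 0 := Nat.cast_ne_zero.mpr m.factorial_ne_zero
    rcases eq_or_ne ((ascPochhammer ℝ m).eval (α+1)) 0 with hd | hd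
    · simp [hd]
    · field_simp
      rw [neg_pow (1/2 : ℝ)]
      ring
  · rw [if_neg (by omega), if_neg (by omega), mul_zero]

/-- `(n+α+β)·φ_n^{(α,β)} = (n+β)·φ_n^{(α,β−1)} + (n+α)·φ_n^{(α−1,β)}` and
`φ_{n−1}^{(α,β)} = φ_n^{(α,β−1)} − φ_n^{(α−1,β)}`. -/
theorem phi_sum_and_difference_rels (α β : ℝ) (n : ℕ) (hn : 1 ≤ n)
    (hα : ∀ k ≤ n, (ascPochhammer ℝ k).eval (α + 1) ≠ 0)
    (hα' : ∀ k ≤ n, (ascPochhammer ℝ k).eval α ≠ 0) :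
    (C ((n : ℝ) + α + β) * phi α β n =
        C ((n : ℝ) + β) * phi α (β - 1) n + C ((n : ℝ) + α) * phi (α - 1) β n) ∧
    (phi α β (n - 1) = phi α (β - 1) n - phi (α - 1) β n) := by
  
  have hk2 : ∀ k ∈ Finset.range (n/2+1), 2*k ≤ n := by
    intro k hk
    have := Finset.mem_range.mp hk
    omega
  constructor
  · simp only [phi, Finset.mul_sum, ← Finset.sum_add_distrib]
    refine Finset.sum_congr rfl fun k hk => ?_
    have hm : 2*k ≤ n := hk2 k hk
    rw [jacobi_iter_deriv_eval_one, jacobi_iter_deriv_eval_one, jacobi_iter_deriv_eval_one,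
        if_pos hm, if_pos hm, if_pos hm]
    rw [← mul_assoc, ← mul_assoc, ← mul_assoc, ← C_mul, ← C_mul, ← C_mul, ← add_mul, ← C_add]
    exact congrArg (· * X ^ k) (congrArg C (key1 α β n (2*k) hm (hα _ hm) (hα' _ hm)))
  · simp only [phi]
    rw [Finset.sum_subset (Finset.range_subset_range.mpr (by omega : (n-1)/2+1 ≤ n/2+1))
      (fun x hx hx' => by
        rw [jacobi_iter_deriv_eval_one, if_neg (by
          simp only [Finset.mem_range] at hx hx'
          omega), map_zero, zero_mul])]
    rw [← Finset.sum_sub_distrib]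
    refine Finset.sum_congr rfl fun k hk => ?_
    have hm : 2*k ≤ n := hk2 k hk
    rw [jacobi_iter_deriv_eval_one, jacobi_iter_deriv_eval_one, jacobi_iter_deriv_eval_one,
        if_pos hm, if_pos hm, ← sub_mul, ← C_sub]
    refine congrArg (· * X ^ k) (congrArg C ?_)
    obtain ⟨j, rfl⟩ := Nat.exists_eq_add_of_le hm
    exact key2 α β (2*k) j hn (hα _ hm) (hα' _ hm)
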